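/- If κ is an infinite regular cardinal and λ is a cardinal with κ < λ, then the poset [λ]^{<κ} of subsets of λ of cardinality less than κ, ordered by inclusion, is not cofinally equivalent to any coordinatewise product ∏_{μ∈S} μ where S is a set of infinite regular cardinals (including the empty product, i.e., the one-element order). -/

import Mathlib

universe u v w

/-- Two preorders are *cofinally equivalent* if there is a preorder (given here by a
reflexive transitive relation `le` on `R`) such that both are order isomorphic to
cofinal subsets of it. -/
def CofEquiv (P : Type u) (Q : Type v) [Preorder P] [Preorder Q] : Prop :=
  ∃ (R : Type (max u v)) (le : R → R → Prop),
    Reflexive le ∧ Transitive le ∧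
    ∃ (f : P → R) (g : Q → R),
      Function.Injective f ∧ Function.Injective g ∧
      (∀ a b : P, a ≤ b ↔ le (f a) (f b)) ∧
      (∀ a b : Q, a ≤ b ↔ le (g a) (g b)) ∧
      (∀ r : R, ∃ a : P, le r (f a)) ∧
      (∀ r : R, ∃ b : Q, le r (g b))

/-- `[θ]^{<κ}`: subsets of (a set of size) `θ` of cardinality `< κ`, ordered by `⊆`. -/
def SmallSubsets (θ κ : Cardinal.{u}) := {s : Set θ.ord.ToType // Cardinal.mk s < κ}

instance (θ κ : Cardinal.{u}) : Preorder (SmallSubsets θ κ) where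
  le s t := Subtype.val s ⊆ Subtype.val t
  le_refl _ := subset_rfl
  le_trans _ _ _ h1 h2 := Set.Subset.trans h1 h2

/-- In (the canonical well-order of type) a regular cardinal, any small set is bounded. -/
lemma bounded_of_lt_regular {c : Cardinal.{u}} (hc : c.IsRegular) (s : Set c.ord.ToType)
    (hs : Cardinal.mk s < c) : ∃ b, ∀ x ∈ s, x < b := by
  have h : Cardinal.mk s <
      (@Ordinal.type _ ((· < ·) : c.ord.ToType → c.ord.ToType → Prop) isWellOrder_lt).cof := by
    rw [Ordinal.type_toType, hc.cof_eq]; exact hs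
  by_contra hne
  push_neg at hne
  have hcf : IsCofinal s := hne
  rw [Ordinal.cof_type] at h
  exact absurd (Order.cof_le hcf) (not_le.2 h)

/-- If `κ` is an infinite regular cardinal and `κ < λ`, then
`[λ]^{<κ}` (ordered by `⊆`) is not cofinally equivalent to any coordinatewise product
`∏_{μ ∈ S} μ`, where `S` is a set of infinite regular cardinals (the empty product,
a one-element order, included). -/
theorem smallSubsets_not_cofinally_scalene (κ lam : Cardinal.{u}) (hκ : κ.IsRegular)
    (hlt : κ < lam) (S : Set Cardinal.{u}) (hS : ∀ μ ∈ S, μ.IsRegular) :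
    ¬ CofEquiv (SmallSubsets lam κ) (∀ μ : S, (μ : Cardinal.{u}).ord.ToType) := by
  classical
  set D := SmallSubsets lam κ with hD
  set Q := (∀ μ : S, (μ : Cardinal.{u}).ord.ToType) with hQ
  -- D is κ-directed
  have Ddir : ∀ X : Set D, Cardinal.mk X < κ → ∃ u : D, ∀ t ∈ X, t ≤ u := by
    intro X hX
    have hU : Cardinal.mk (⋃ t : X, (t : D).val) < κ := by
      refine lt_of_le_of_lt (Cardinal.mk_iUnion_le _) ?_
      exact Cardinal.mul_lt_of_lt hκ.aleph0_le hX
        (Cardinal.iSup_lt_of_isRegular hκ hX fun t => (t : D).2)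
    refine ⟨⟨_, hU⟩, fun t ht => ?_⟩
    exact Set.subset_iUnion (fun i : X => (i : D).val) ⟨t, ht⟩
  -- the family of singletons in D
  have hone : (1 : Cardinal.{u}) < κ := Cardinal.one_lt_aleph0.trans_le hκ.aleph0_le
  let F : lam.ord.ToType → D := fun x => ⟨{x}, by rw [Cardinal.mk_singleton]; exact hone⟩
  have hFinj : Function.Injective F := by
    intro a b h
    have : ({a} : Set lam.ord.ToType) = {b} := congrArg Subtype.val h
    exact Set.singleton_eq_singleton_iff.1 this
  have hA : Cardinal.mk (Set.range F) = lam := by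
    rw [Cardinal.mk_range_eq F hFinj, Cardinal.mk_ord_toType]
  have hAunb : ∀ B ⊆ Set.range F, κ ≤ Cardinal.mk B → ∀ u : D, ¬(∀ t ∈ B, t ≤ u) := by
    intro B hB hBcard u hub
    have hsel : ∀ b : B, ∃ x, F x = (b : D) := fun b => hB b.2
    choose x hx using hsel
    have hxmem : ∀ b : B, x b ∈ u.val := by
      intro b
      have h1 : (b : D).val ⊆ u.val := hub b b.2
      have h2 : ({x b} : Set lam.ord.ToType) = (b : D).val := congrArg Subtype.val (hx b)
      exact h1 (h2 ▸ rfl)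
    have hinj : Function.Injective (fun b : B => (⟨x b, hxmem b⟩ : u.val)) := by
      intro a b h
      have hx' : x a = x b := congrArg Subtype.val h
      have : (a : D) = (b : D) := by rw [← hx a, ← hx b, hx']
      exact Subtype.ext this
    have := Cardinal.mk_le_of_injective hinj
    exact absurd (hBcard.trans this) (not_le.2 u.2)
  -- unfold the cofinal equivalence
  rintro ⟨R, le, hrefl, htrans, f, g, hfinj, hginj, hf, hg, hcf, hcg⟩
  choose af haf using hcf
  choose qf hqf using fun a : D => hcg (f a)
  -- Q is κ-directed (for small-universe index families)
  have Qdir : ∀ (ι : Type u) (h : ι → Q), Cardinal.mk ι < κ → ∃ u : Q, ∀ i, h i ≤ u := by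
    intro ι h hι
    obtain ⟨u, hu⟩ := Ddir (Set.range fun i : ι => af (g (h i)))
      (Cardinal.mk_range_le.trans_lt hι)
    obtain ⟨qs, hqs⟩ := hcg (f u)
    refine ⟨qs, fun i => ?_⟩
    have h1 : le (g (h i)) (f (af (g (h i)))) := haf _
    have h2 : af (g (h i)) ≤ u := hu _ ⟨i, rfl⟩
    exact (hg _ _).2 (htrans h1 (htrans ((hf _ _).1 h2) hqs))
  -- all μ ∈ S satisfy κ ≤ μ
  have hne : ∀ μ : S, Nonempty ((μ : Cardinal).ord.ToType) := by
    intro μ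
    refine Cardinal.mk_ne_zero_iff.1 ?_
    rw [Cardinal.mk_ord_toType]
    exact (hS μ μ.2).pos.ne'
  have hQge : ∀ μ : S, κ ≤ (μ : Cardinal) := by
    by_contra h
    push_neg at h
    obtain ⟨i, hi⟩ := h
    let q₀ : Q := fun μ => Classical.choice (hne μ)
    let G : ((i : Cardinal)).ord.ToType → Q := fun β => Function.update q₀ i β
    obtain ⟨u, hu⟩ := Qdir _ G (by rw [Cardinal.mk_ord_toType]; exact hi)
    haveI := Cardinal.noMaxOrder (hS i i.2).aleph0_le
    obtain ⟨b, hb⟩ := exists_gt (u i)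
    have hle : G b i ≤ u i := hu b i
    rw [show G b i = b from Function.update_self i b q₀] at hle
    exact hb.not_ge hle
  -- the transferred strongly unbounded family, indexed in universe u
  let T := (Set.range F : Set D)
  let q' : T → Q := fun a => qf (a : D)
  have hT : Cardinal.mk T = lam := hA
  have Tunb : ∀ s : Set T, κ ≤ Cardinal.mk s → ∀ u : Q, ¬ ∀ a ∈ s, q' a ≤ u := by
    intro s hs u hub
    refine hAunb (Subtype.val '' s) ?_ ?_ (af (g u)) ?_
    · rintro t ⟨a, _, rfl⟩; exact a.2
    · rw [Cardinal.mk_image_eq Subtype.val_injective]; exact hs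
    · rintro t ⟨a, ha, rfl⟩
      have h1 : le (f (a : D)) (g (q' a)) := hqf _
      have h2 : le (g (q' a)) (g u) := (hg _ _).1 (hub a ha)
      exact (hf _ _).2 (htrans h1 (htrans h2 (haf (g u))))
  -- extract a κ-sized subfamily with small coordinate projections
  have hBex : ∃ s : Set T, Cardinal.mk s = κ ∧
      ∀ μ : S, Cardinal.mk ((fun a : T => q' a μ) '' s) < (μ : Cardinal) := by
    by_cases hk : κ ∈ S
    · let i : S := ⟨κ, hk⟩
      let h : T → ((i : Cardinal)).ord.ToType := fun a => q' a i
      have hfib : ∃ t, κ ≤ Cardinal.mk {a : T | h a = t} := by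
        by_contra hno
        push_neg at hno
        have h1 : lam ≤ κ := by
          calc lam = Cardinal.mk T := hT.symm
            _ = Cardinal.mk (Σ t, {a : T // h a = t}) :=
                (Cardinal.mk_congr (Equiv.sigmaFiberEquiv h)).symm
            _ = Cardinal.sum fun t => Cardinal.mk {a : T // h a = t} := Cardinal.mk_sigma _
            _ ≤ Cardinal.sum fun _ : ((i : Cardinal)).ord.ToType => κ :=
                Cardinal.sum_le_sum _ _ fun t => (hno t).le
            _ = Cardinal.mk ((i : Cardinal)).ord.ToType * κ := Cardinal.sum_const' _ _
            _ = κ * κ := by rw [Cardinal.mk_ord_toType]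
            _ = κ := Cardinal.mul_eq_self hκ.aleph0_le
        exact absurd h1 (not_le.2 hlt)
      obtain ⟨t, ht⟩ := hfib
      obtain ⟨s, hs1, hs2⟩ := Cardinal.le_mk_iff_exists_subset.1 ht
      refine ⟨s, hs2, fun μ => ?_⟩
      by_cases hμ : μ = i
      · subst hμ
        have himg : (fun a : T => q' a i) '' s ⊆ {t} := by
          rintro _ ⟨a, ha, rfl⟩; exact hs1 ha
        calc Cardinal.mk ((fun a : T => q' a i) '' s)
            ≤ Cardinal.mk ({t} : Set ((i : Cardinal)).ord.ToType) :=
              Cardinal.mk_le_mk_of_subset himg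
          _ = 1 := Cardinal.mk_singleton _
          _ < ((i : S) : Cardinal) := hone
      · have hlt' : κ < (μ : Cardinal) :=
          lt_of_le_of_ne (hQge μ) fun hh => hμ (Subtype.ext hh.symm)
        calc Cardinal.mk ((fun a : T => q' a μ) '' s) ≤ Cardinal.mk s := Cardinal.mk_image_le
          _ = κ := hs2
          _ < (μ : Cardinal) := hlt'
    · have hκT : κ ≤ Cardinal.mk (Set.univ : Set T) := by
        rw [Cardinal.mk_univ, hT]; exact hlt.le
      obtain ⟨s, _, hs2⟩ := Cardinal.le_mk_iff_exists_subset.1 hκT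
      refine ⟨s, hs2, fun μ => ?_⟩
      have hlt' : κ < (μ : Cardinal) :=
        lt_of_le_of_ne (hQge μ) fun hh => hk (hh ▸ μ.2)
      calc Cardinal.mk ((fun a : T => q' a μ) '' s) ≤ Cardinal.mk s := Cardinal.mk_image_le
        _ = κ := hs2
        _ < (μ : Cardinal) := hlt'
  obtain ⟨s, hscard, hssmall⟩ := hBex
  have hbd : ∀ μ : S, ∃ b, ∀ x ∈ (fun a : T => q' a μ) '' s, x < b :=
    fun μ => bounded_of_lt_regular (hS μ μ.2) _ (hssmall μ)
  choose ub hub using hbd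
  exact Tunb s hscard.ge (fun μ => ub μ)
    (fun a ha => fun μ => (hub μ (q' a μ) ⟨a, ha, rfl⟩).le)
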